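/- Let G be a 2-connected, locally finite, claw-free graph such that for every induced paw of G with pendant vertex a₁ and triangle vertices a₀, b₁, b₂ (where a₁ is adjacent only to a₀), the vertex a₁ has a common neighbour outside the paw with b₁ or with b₂. Let C be a cycle in G and v a vertex adjacent to some vertex of C but not on C. Then there exist a cycle C' and a vertex w adjacent to C such that V(C) ∪ {v} ⊆ V(C') ⊆ V(C) ∪ {v, w}, and moreover every edge in the symmetric difference E(C) Δ E(C') has at least one endvertex at distance at most 2 from v. -/

import Mathlib

open SimpleGraph

/-- The claw `K_{1,3}`: vertex `0` is the centre, adjacent to `1`, `2`, `3`. -/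
def claw : SimpleGraph (Fin 4) := SimpleGraph.fromRel (fun a _ => a = 0)

/-- The paw: a triangle on `1, 2, 3` with pendant vertex `0` attached to `1`. -/
def paw : SimpleGraph (Fin 4) :=
  SimpleGraph.fromRel (fun a b => (a = 0 ∧ b = 1) ∨ (a ≠ 0 ∧ b ≠ 0))

/-- `G` is `H`-free: no induced subgraph of `G` is isomorphic to `H`.
(`H ↪g G` is a graph embedding, i.e. an isomorphism onto an induced subgraph.) -/
def HFree {W V : Type*} (H : SimpleGraph W) (G : SimpleGraph V) : Prop :=
  ¬ Nonempty (H ↪g G)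

/-- `G` is 2-connected: at least 3 vertices, connected, and deleting any vertex
leaves it connected. -/
def TwoConnected {V : Type*} (G : SimpleGraph V) : Prop :=
  (∃ a b c : V, a ≠ b ∧ a ≠ c ∧ b ≠ c) ∧ G.Connected ∧
    ∀ v : V, (G.induce {u | u ≠ v}).Connected

/-- The hypothesis that every induced paw of `G`, with pendant vertex `a₁` adjacent
precisely to the triangle vertex `a₀`, satisfies `φ(a₁,b₁)` or `φ(a₁,b₂)`:
`a₁` has a common neighbour outside the paw with `b₁` or with `b₂`. -/
def PawCondition {V : Type*} (G : SimpleGraph V) : Prop :=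
  ∀ a₁ a₀ b₁ b₂ : V,
    G.Adj a₁ a₀ → G.Adj a₀ b₁ → G.Adj a₀ b₂ → G.Adj b₁ b₂ →
    ¬ G.Adj a₁ b₁ → ¬ G.Adj a₁ b₂ → a₁ ≠ b₁ → a₁ ≠ b₂ →
    ∃ x, x ∉ ({a₁, a₀, b₁, b₂} : Set V) ∧ G.Adj x a₁ ∧ (G.Adj x b₁ ∨ G.Adj x b₂)

/-- A ray (one-way infinite path) in `G`, given by its sequence of vertices. -/
def IsRay {V : Type*} (G : SimpleGraph V) (f : ℕ → V) : Prop :=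
  Function.Injective f ∧ ∀ n, G.Adj (f n) (f (n + 1))

/-- Two rays are equivalent (belong to the same end) if no finite vertex set
separates them. -/
def EndEquiv {V : Type*} (G : SimpleGraph V) (f g : ℕ → V) : Prop :=
  ∀ S : Set V, S.Finite →
    ∃ (m n : ℕ) (p : G.Walk (f m) (g n)), ∀ x ∈ p.support, x ∉ S

/-- The ends of `G`, as equivalence classes of rays. -/
def Ends {V : Type*} (G : SimpleGraph V) : Type _ :=
  Quot (fun f g : {f : ℕ → V // IsRay G f} => EndEquiv G f.1 g.1)

/-- The edge cut `δ(X)`. -/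
def edgeCut {V : Type*} (G : SimpleGraph V) (X : Set V) : Set (Sym2 V) :=
  {e | e ∈ G.edgeSet ∧ ∃ a b, e = s(a, b) ∧ a ∈ X ∧ b ∉ X}

/-- `G` has a Hamilton circle in its Freudenthal compactification `|G|`,
expressed combinatorially: there is a spanning edge set `C` in which every
vertex has degree exactly `2` and which meets every finite cut of `G` in a
positive even number of edges (for locally finite connected `G` this
characterises edge sets whose closure in `|G|` is a circle through all
vertices). -/
def HasHamiltonCircle {V : Type*} (G : SimpleGraph V) : Prop :=
  ∃ C ⊆ G.edgeSet, (∀ v : V, {e ∈ C | v ∈ e}.ncard = 2) ∧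
    ∀ X : Set V, X.Nonempty → Xᶜ.Nonempty → (edgeCut G X).Finite →
      (C ∩ edgeCut G X).Nonempty ∧ Even ((C ∩ edgeCut G X).ncard)

/-- The end represented by the ray `g` lies in the closure (in `|G|`) of the
vertex set `M`: for every finite `S`, the component of `G - S` containing a
tail of `g` meets `M`. -/
def EndInClosure {V : Type*} (G : SimpleGraph V) (g : ℕ → V) (M : Set V) : Prop :=
  ∀ S : Set V, S.Finite → ∃ u ∈ M, ∃ N : ℕ, ∀ n ≥ N,
    ∃ p : G.Walk u (g n), ∀ x ∈ p.support, x ∉ S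

/-- `S` is a vertex separator of `G`: `G - S` is disconnected. -/
def IsSeparator {V : Type*} (G : SimpleGraph V) (S : Set V) : Prop :=
  ∃ (u : V) (hu : u ∉ S) (v : V) (hv : v ∉ S),
    ¬ (G.induce {x | x ∉ S}).Reachable ⟨u, hu⟩ ⟨v, hv⟩

/-- `S` is a minimal vertex separator of `G`. -/
def IsMinSeparator {V : Type*} (G : SimpleGraph V) (S : Set V) : Prop :=
  IsSeparator G S ∧ ∀ T ⊂ S, ¬ IsSeparator G T

/-- The `k`-blow-up of `G`: each vertex is replaced by a `k`-clique. -/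
def blowup {V : Type*} (G : SimpleGraph V) (k : ℕ) : SimpleGraph (V × Fin k) where
  Adj x y := (x.1 = y.1 ∧ x.2 ≠ y.2) ∨ G.Adj x.1 y.1
  symm := by
    refine ⟨?_⟩
    rintro x y (⟨h1, h2⟩ | h)
    · exact Or.inl ⟨h1.symm, h2.symm⟩
    · exact Or.inr h.symm
  loopless := by
    refine ⟨?_⟩
    rintro x (⟨_, h⟩ | h)
    · exact h rfl
    · exact G.loopless.irrefl _ h

section
variable {V : Type} {G : SimpleGraph V}


abbrev AuxGoal (G : SimpleGraph V) (v : V) (s : Set V) (E : Set (Sym2 V)) : Prop :=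
  ∃ (b : V) (C' : G.Walk b b) (w : V), C'.IsCycle ∧
    (∃ u ∈ s, u = w ∨ G.Adj u w) ∧
    s ∪ {v} ⊆ {x | x ∈ C'.support} ∧
    {x | x ∈ C'.support} ⊆ s ∪ {v, w} ∧
    ∀ e ∈ symmDiff E {e | e ∈ C'.edges},
      ∃ x ∈ e, G.dist v x ≤ 2

lemma aux_dist1 {a b : V} (h : G.Adj a b) : G.dist a b ≤ 2 :=
  le_trans (SimpleGraph.dist_le h.toWalk) (by simp)

lemma aux_dist2 {a b c : V} (h1 : G.Adj a b) (h2 : G.Adj b c) : G.dist a c ≤ 2 :=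
  le_trans (SimpleGraph.dist_le (Walk.cons h1 h2.toWalk)) (by simp)

lemma aux_claw (hclaw : HFree claw G) {c a b d : V}
    (hca : G.Adj c a) (hcb : G.Adj c b) (hcd : G.Adj c d)
    (hab : a ≠ b) (had : a ≠ d) (hbd : b ≠ d)
    (nab : ¬ G.Adj a b) (nad : ¬ G.Adj a d) : G.Adj b d := by
  by_contra nbd
  have nba : ¬ G.Adj b a := fun h => nab h.symm
  have nda : ¬ G.Adj d a := fun h => nad h.symm
  have ndb : ¬ G.Adj d b := fun h => nbd h.symm
  apply hclaw
  refine ⟨⟨⟨![c,a,b,d], ?_⟩, ?_⟩⟩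
  · intro i j hij
    fin_cases i <;> fin_cases j <;>
      simp_all [hca.ne, hcb.ne, hcd.ne, hca.ne', hcb.ne', hcd.ne']
  · intro i j
    show G.Adj (![c,a,b,d] i) (![c,a,b,d] j) ↔ claw.Adj i j
    fin_cases i <;> fin_cases j <;>
      simp [claw, SimpleGraph.fromRel_adj, hca, hcb, hcd, hca.symm, hcb.symm, hcd.symm,
        nab, nad, nbd, nba, nda, ndb, G.irrefl]

lemma aux_path_loop {a : V} {p : G.Walk a a} (hp : p.IsPath) : p = Walk.nil := by
  cases p with
  | nil => rfl
  | cons h q =>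
    exfalso
    have := hp.support_nodup
    simp [Walk.support_cons] at this

lemma aux_mem_tail {b x : V} {p : G.Walk b b} (hnn : ¬p.Nil) :
    x ∈ p.support ↔ x ∈ p.support.tail := by
  obtain ⟨c, hc, q, rfl⟩ := Walk.not_nil_iff.mp hnn
  simp only [Walk.support_cons, List.tail_cons, List.mem_cons]
  exact ⟨fun h => h.elim (fun he => he ▸ q.end_mem_support) id, Or.inr⟩

lemma aux_cycle_decomp {u : V} (p : G.Walk u u) (h : p.IsCycle) :
    ∃ (c d : V) (ha : G.Adj u c) (hb : G.Adj u d) (t : G.Walk c d),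
      d ≠ c ∧ p = Walk.cons ha (t.concat hb.symm) ∧
      p.reverse = Walk.cons hb (t.reverse.concat ha.symm) := by
  have h3 := h.three_le_length
  obtain ⟨c, ha, q, rfl⟩ := Walk.not_nil_iff.mp h.not_nil
  obtain ⟨d', hb', t', hrev⟩ := Walk.not_nil_iff.mp (by
    rw [Walk.nil_iff_length_eq, Walk.length_reverse, ← Walk.nil_iff_length_eq]
    intro hn
    rw [Walk.nil_iff_length_eq] at hn
    simp [hn] at h3 : ¬ q.reverse.Nil)
  have hqe : q = t'.reverse.concat hb'.symm := by
    rw [← Walk.reverse_reverse q, hrev, Walk.reverse_cons]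
    simp [Walk.concat_eq_append]
  subst hqe
  rw [Walk.cons_isCycle_iff] at h
  obtain ⟨hpath, hedge⟩ := h
  have hsup := hpath.support_nodup
  rw [Walk.support_concat, List.nodup_append] at hsup
  obtain ⟨htn, -, hdisj⟩ := hsup
  have hcd : d' ≠ c := by
    intro hcd
    subst hcd
    have : t'.reverse = Walk.nil := aux_path_loop (Walk.IsPath.mk' htn)
    rw [this] at h3
    simp at h3
  refine ⟨c, d', ha, hb', t'.reverse, hcd, rfl, ?_⟩
  rw [Walk.reverse_cons, Walk.reverse_concat]
  simp [Walk.concat_eq_append, Walk.cons_append]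

lemma aux_isCycle_reverse {u : V} {p : G.Walk u u} (h : p.IsCycle) : p.reverse.IsCycle := by
  obtain ⟨c, d, ha, hb, t, hcd, rfl, hrw⟩ := aux_cycle_decomp p h
  rw [Walk.cons_isCycle_iff] at h
  obtain ⟨hpath, hedge⟩ := h
  have hsup := hpath.support_nodup
  rw [Walk.support_concat, List.nodup_append] at hsup
  obtain ⟨htn, -, hdisj⟩ := hsup
  have hut : u ∉ t.support := fun hm => hdisj u hm u (by simp) rfl
  rw [hrw, Walk.cons_isCycle_iff]
  constructor
  · apply Walk.IsPath.mk'
    rw [Walk.support_concat, List.nodup_append]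
    refine ⟨by simp [Walk.support_reverse, htn], by simp, ?_⟩
    intro a hm b hm2 hab
    simp only [Walk.support_reverse, List.mem_reverse] at hm
    simp only [List.mem_singleton] at hm2
    subst hm2
    subst hab
    exact hut hm
  · rw [Walk.edges_concat, List.concat_eq_append]
    intro hmem
    rw [List.mem_append] at hmem
    rcases hmem with hm | hm
    · rw [Walk.edges_reverse, List.mem_reverse] at hm
      exact hut (Walk.fst_mem_support_of_mem_edges t hm)
    · rw [List.mem_singleton, Sym2.eq_iff] at hm
      rcases hm with ⟨h1, h2⟩ | ⟨h1, h2⟩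
      · exact ha.ne h1
      · exact hcd h2



lemma aux_S1 {v u c : V} (h : G.Adj u c) (q : G.Walk c u)
    (hcyc : (Walk.cons h q).IsCycle) (hv : v ∉ (Walk.cons h q).support)
    (hvu : G.Adj v u) (hvc : G.Adj v c) :
    AuxGoal G v {y | y ∈ (Walk.cons h q).support} {e | e ∈ (Walk.cons h q).edges} := by
  rw [Walk.cons_isCycle_iff] at hcyc
  obtain ⟨hq, hsuc⟩ := hcyc
  simp only [Walk.support_cons, List.mem_cons, not_or] at hv
  obtain ⟨hvu', hvq⟩ := hv
  refine ⟨u, Walk.cons hvu.symm (Walk.cons hvc q), v, ?_, ⟨u, by simp, Or.inr hvu.symm⟩,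
    ?_, ?_, ?_⟩
  · rw [Walk.cons_isCycle_iff]
    refine ⟨(Walk.cons_isPath_iff _ _).mpr ⟨hq, hvq⟩, ?_⟩
    intro hm
    rw [Walk.edges_cons, List.mem_cons] at hm
    rcases hm with hm | hm
    · rw [Sym2.eq_iff] at hm
      rcases hm with ⟨h1, h2⟩ | ⟨h1, h2⟩
      · exact hvu' h1.symm
      · exact h.ne h1
    · exact hvq (Walk.snd_mem_support_of_mem_edges q hm)
  · intro y hy
    simp only [Set.mem_union, Set.mem_setOf_eq, Set.mem_singleton_iff, Walk.support_cons,
      List.mem_cons] at hy ⊢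
    tauto
  · intro y hy
    simp only [Set.mem_union, Set.mem_setOf_eq, Set.mem_singleton_iff, Walk.support_cons,
      List.mem_cons, Set.mem_insert_iff] at hy ⊢
    tauto
  · intro e he
    rw [Set.mem_symmDiff] at he
    simp only [Set.mem_setOf_eq, Walk.edges_cons, List.mem_cons, not_or] at he
    rcases he with ⟨h1, h2⟩ | ⟨h1, h2⟩
    · obtain ⟨h2a, h2b, h2c⟩ := h2
      rcases h1 with h1 | h1
      · subst h1
        exact ⟨u, by simp, aux_dist1 hvu⟩
      · exact absurd h1 h2c
    · obtain ⟨h2a, h2b⟩ := h2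
      rcases h1 with h1 | h1 | h1
      · subst h1
        exact ⟨u, by simp, aux_dist1 hvu⟩
      · subst h1
        exact ⟨c, by simp, aux_dist1 hvc⟩
      · exact absurd h1 h2b


lemma aux_attach {v u c x : V} (h : G.Adj u c) (q : G.Walk c u)
    (hcyc : (Walk.cons h q).IsCycle) (hv : v ∉ (Walk.cons h q).support)
    (hx : x ∉ (Walk.cons h q).support) (hvu : G.Adj v u) (hvx : G.Adj v x)
    (hxc : G.Adj x c) (hvx' : v ≠ x) :
    AuxGoal G v {y | y ∈ (Walk.cons h q).support} {e | e ∈ (Walk.cons h q).edges} := by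
  rw [Walk.cons_isCycle_iff] at hcyc
  obtain ⟨hq, hsuc⟩ := hcyc
  simp only [Walk.support_cons, List.mem_cons, not_or] at hv hx
  obtain ⟨hvu', hvq⟩ := hv
  obtain ⟨hxu, hxq⟩ := hx
  refine ⟨u, Walk.cons hvu.symm (Walk.cons hvx (Walk.cons hxc q)), x, ?_,
    ⟨c, by simp [Walk.start_mem_support], Or.inr hxc.symm⟩, ?_, ?_, ?_⟩
  · rw [Walk.cons_isCycle_iff]
    refine ⟨(Walk.cons_isPath_iff _ _).mpr
      ⟨(Walk.cons_isPath_iff _ _).mpr ⟨hq, hxq⟩, by simp [hvx', hvq]⟩, ?_⟩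
    simp only [Walk.edges_cons, List.mem_cons, not_or]
    refine ⟨?_, ?_, fun hm => hvq (Walk.snd_mem_support_of_mem_edges q hm)⟩
    · rw [Sym2.eq_iff]
      rintro (⟨h1, h2⟩ | ⟨h1, h2⟩)
      · exact hvu' h1.symm
      · exact hxu h1.symm
    · rw [Sym2.eq_iff]
      rintro (⟨h1, h2⟩ | ⟨h1, h2⟩)
      · exact hxu h1.symm
      · exact h.ne h1
  · intro y hy
    simp only [Set.mem_union, Set.mem_setOf_eq, Set.mem_singleton_iff, Walk.support_cons,
      List.mem_cons] at hy ⊢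
    tauto
  · intro y hy
    simp only [Set.mem_union, Set.mem_setOf_eq, Set.mem_singleton_iff, Walk.support_cons,
      List.mem_cons, Set.mem_insert_iff] at hy ⊢
    tauto
  · intro e he
    rw [Set.mem_symmDiff] at he
    simp only [Set.mem_setOf_eq, Walk.edges_cons, List.mem_cons, not_or] at he
    rcases he with ⟨h1, h2⟩ | ⟨h1, h2⟩
    · obtain ⟨h2a, h2b, h2c, h2d⟩ := h2
      rcases h1 with h1 | h1
      · subst h1
        exact ⟨u, by simp, aux_dist1 hvu⟩
      · exact absurd h1 h2d
    · obtain ⟨h2a, h2b⟩ := h2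
      rcases h1 with h1 | h1 | h1 | h1
      · subst h1
        exact ⟨u, by simp, aux_dist1 hvu⟩
      · subst h1
        exact ⟨v, by simp, by simp [SimpleGraph.dist_self]⟩
      · subst h1
        exact ⟨x, by simp, aux_dist1 hvx⟩
      · exact absurd h1 h2b


set_option maxHeartbeats 2000000 in
lemma aux_half [DecidableEq V] (hclaw : HFree claw G) {v u c x : V} (h : G.Adj u c)
    (q : G.Walk c u) (hcyc : (Walk.cons h q).IsCycle) (hv : v ∉ (Walk.cons h q).support)
    (hvu : G.Adj v u) (hvx : G.Adj v x) (hxc : G.Adj x c) (hxu : x ≠ u) (hxc' : x ≠ c) :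
    AuxGoal G v {y | y ∈ (Walk.cons h q).support} {e | e ∈ (Walk.cons h q).edges} := by
  by_cases hxs : x ∈ (Walk.cons h q).support
  case neg => exact aux_attach h q hcyc hv hxs hvu hvx hxc hvx.ne
  have hxq : x ∈ q.support := by
    rcases List.mem_cons.mp (by simpa using hxs) with h1 | h1
    · exact absurd h1 hxu
    · exact h1
  obtain ⟨q1, q2, rfl⟩ : ∃ (q1 : G.Walk c x) (q2 : G.Walk x u), q1.append q2 = q :=
    ⟨_, _, q.take_spec hxq⟩
  have hq2nn : ¬ q2.Nil := by
    intro hn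
    cases hn
    exact hxu rfl
  obtain ⟨z, hxz, r, rfl⟩ := Walk.not_nil_iff.mp hq2nn
  have hq1nn : ¬ q1.reverse.Nil := by
    rw [Walk.nil_iff_length_eq, Walk.length_reverse, ← Walk.nil_iff_length_eq]
    intro hn
    cases hn
    exact hxc' rfl
  obtain ⟨y, hxy, s, hs⟩ := Walk.not_nil_iff.mp hq1nn
  obtain ⟨t, rfl⟩ : ∃ t : G.Walk c y, q1 = t.concat hxy.symm := by
    refine ⟨s.reverse, ?_⟩
    rw [← Walk.reverse_reverse q1, hs, Walk.reverse_cons]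
    simp [Walk.concat_eq_append]
  have hyx : G.Adj y x := hxy.symm
  -- basic facts
  have hpath : ((t.concat hyx).append (Walk.cons hxz r)).IsPath :=
    ((Walk.cons_isCycle_iff _ _).mp hcyc).1
  have hsup := hpath.support_nodup
  rw [Walk.support_append, Walk.support_concat, Walk.support_cons,
    List.tail_cons, List.append_assoc, List.singleton_append, List.nodup_middle,
    List.nodup_cons, List.mem_append] at hsup
  obtain ⟨hxmem, htr⟩ := hsup
  push_neg at hxmem
  obtain ⟨hxt, hxr⟩ := hxmem
  have hdisj : t.support.Disjoint r.support := List.disjoint_of_nodup_append htr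
  simp only [Walk.support_cons, Walk.support_append, Walk.support_concat, List.concat_eq_append,
    List.tail_cons, List.mem_cons, List.mem_append, List.not_mem_nil, or_false, not_or] at hv
  obtain ⟨hvnu, ⟨hvt, hvnx⟩, hvr⟩ := hv
  have hut : u ∉ t.support := fun hm => hdisj hm r.end_mem_support
  have hcr : c ∉ r.support := fun hm => hdisj t.start_mem_support hm
  have hyr : y ∉ r.support := fun hm => hdisj t.end_mem_support hm
  have hyz_ne : y ≠ z := fun he => hyr (he ▸ r.start_mem_support)
  have hvy : v ≠ y := fun he => hvt (he ▸ t.end_mem_support)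
  have hvz : v ≠ z := fun he => hvr (he ▸ r.start_mem_support)
  have hvc' : v ≠ c := fun he => hvt (he ▸ t.start_mem_support)
  have huy : u ≠ y := fun he => hut (he ▸ t.end_mem_support)
  by_cases havz : G.Adj v z
  · -- insert v between x and z
    refine ⟨u, Walk.cons h ((t.concat hyx).append (Walk.cons hvx.symm (Walk.cons havz r))), v,
      ?_, ⟨u, by simp, Or.inr hvu.symm⟩, ?_, ?_, ?_⟩
    · rw [Walk.cons_isCycle_iff]
      constructor
      · apply Walk.IsPath.mk'
        simp only [Walk.support_append, Walk.support_concat, List.concat_eq_append,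
          Walk.support_cons, List.tail_cons]
        rw [List.append_assoc, List.singleton_append, List.nodup_middle, List.nodup_cons]
        constructor
        · simp only [List.mem_cons, List.mem_append, not_or]
          exact ⟨hxt, fun he => hvnx he.symm, hxr⟩
        · rw [List.nodup_middle, List.nodup_cons]
          refine ⟨?_, htr⟩
          simp only [List.mem_append, not_or]
          exact ⟨hvt, hvr⟩
      · intro hm
        simp only [Walk.edges_append, Walk.edges_concat, List.concat_eq_append, Walk.edges_cons,
          List.mem_append, List.mem_cons, List.not_mem_nil, or_false] at hm
        rcases hm with (hm | hm) | hm | hm | hm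
        · exact hut (Walk.fst_mem_support_of_mem_edges t hm)
        · rw [Sym2.eq_iff] at hm
          rcases hm with ⟨h1, h2⟩ | ⟨h1, h2⟩
          · exact hxc' h2.symm
          · exact hxu h1.symm
        · rw [Sym2.eq_iff] at hm
          rcases hm with ⟨h1, h2⟩ | ⟨h1, h2⟩
          · exact hxu h1.symm
          · exact hvnu h1.symm
        · rw [Sym2.eq_iff] at hm
          rcases hm with ⟨h1, h2⟩ | ⟨h1, h2⟩
          · exact hvnu h1.symm
          · exact hvc' h2.symm
        · exact hcr (Walk.snd_mem_support_of_mem_edges r hm)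
    · intro w hw
      simp only [Set.mem_union, Set.mem_setOf_eq, Set.mem_singleton_iff, Walk.support_cons,
        Walk.support_append, Walk.support_concat, List.concat_eq_append, List.tail_cons,
        List.mem_cons, List.mem_append, List.not_mem_nil, or_false] at hw ⊢
      tauto
    · intro w hw
      simp only [Set.mem_union, Set.mem_setOf_eq, Set.mem_singleton_iff, Set.mem_insert_iff,
        Walk.support_cons, Walk.support_append, Walk.support_concat, List.concat_eq_append,
        List.tail_cons, List.mem_cons, List.mem_append, List.not_mem_nil, or_false] at hw ⊢
      tauto
    · intro e he
      rw [Set.mem_symmDiff] at he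
      simp only [Set.mem_setOf_eq, Walk.edges_cons, Walk.edges_append, Walk.edges_concat,
        List.concat_eq_append, List.mem_cons, List.mem_append, List.not_mem_nil, or_false,
        not_or] at he
      rcases he with ⟨h1, h2⟩ | ⟨h1, h2⟩
      · obtain ⟨n1, ⟨n2, n3⟩, n4, n5, n6⟩ := h2
        rcases h1 with h1 | (h1 | h1) | h1 | h1
        · exact absurd h1 n1
        · exact absurd h1 n2
        · exact absurd h1 n3
        · subst h1
          exact ⟨x, by simp, aux_dist1 hvx⟩
        · exact absurd h1 n6
      · obtain ⟨n1, ⟨n2, n3⟩, n4, n5⟩ := h2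
        rcases h1 with h1 | (h1 | h1) | h1 | h1 | h1
        · exact absurd h1 n1
        · exact absurd h1 n2
        · exact absurd h1 n3
        · subst h1
          exact ⟨x, by simp, aux_dist1 hvx⟩
        · subst h1
          exact ⟨v, by simp, by simp [SimpleGraph.dist_self]⟩
        · exact absurd h1 n5
  by_cases havy : G.Adj v y
  · -- insert v between y and x
    refine ⟨u, Walk.cons h (t.append (Walk.cons havy.symm (Walk.cons hvx (Walk.cons hxz r)))),
      v, ?_, ⟨u, by simp, Or.inr hvu.symm⟩, ?_, ?_, ?_⟩
    · rw [Walk.cons_isCycle_iff]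
      constructor
      · apply Walk.IsPath.mk'
        simp only [Walk.support_append, Walk.support_cons, List.tail_cons]
        rw [List.nodup_middle, List.nodup_cons]
        constructor
        · simp only [List.mem_cons, List.mem_append, not_or]
          exact ⟨hvt, hvnx, hvr⟩
        · rw [List.nodup_middle, List.nodup_cons]
          refine ⟨?_, htr⟩
          simp only [List.mem_append, not_or]
          exact ⟨hxt, hxr⟩
      · intro hm
        simp only [Walk.edges_append, Walk.edges_cons, List.mem_append, List.mem_cons,
          List.not_mem_nil, or_false] at hm
        rcases hm with hm | hm | hm | hm | hm
        · exact hut (Walk.fst_mem_support_of_mem_edges t hm)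
        · rw [Sym2.eq_iff] at hm
          rcases hm with ⟨h1, h2⟩ | ⟨h1, h2⟩
          · exact huy h1
          · exact hvnu h1.symm
        · rw [Sym2.eq_iff] at hm
          rcases hm with ⟨h1, h2⟩ | ⟨h1, h2⟩
          · exact hvnu h1.symm
          · exact hxu h1.symm
        · rw [Sym2.eq_iff] at hm
          rcases hm with ⟨h1, h2⟩ | ⟨h1, h2⟩
          · exact hxu h1.symm
          · exact hxc' h2.symm
        · exact hcr (Walk.snd_mem_support_of_mem_edges r hm)
    · intro w hw
      simp only [Set.mem_union, Set.mem_setOf_eq, Set.mem_singleton_iff, Walk.support_cons,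
        Walk.support_append, Walk.support_concat, List.concat_eq_append, List.tail_cons,
        List.mem_cons, List.mem_append, List.not_mem_nil, or_false] at hw ⊢
      tauto
    · intro w hw
      simp only [Set.mem_union, Set.mem_setOf_eq, Set.mem_singleton_iff, Set.mem_insert_iff,
        Walk.support_cons, Walk.support_append, Walk.support_concat, List.concat_eq_append,
        List.tail_cons, List.mem_cons, List.mem_append, List.not_mem_nil, or_false] at hw ⊢
      tauto
    · intro e he
      rw [Set.mem_symmDiff] at he
      simp only [Set.mem_setOf_eq, Walk.edges_cons, Walk.edges_append, Walk.edges_concat,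
        List.concat_eq_append, List.mem_cons, List.mem_append, List.not_mem_nil, or_false,
        not_or] at he
      rcases he with ⟨h1, h2⟩ | ⟨h1, h2⟩
      · obtain ⟨n1, n2, n3, n4, n5, n6⟩ := h2
        rcases h1 with h1 | (h1 | h1) | h1 | h1
        · exact absurd h1 n1
        · exact absurd h1 n2
        · subst h1
          exact ⟨x, by simp, aux_dist1 hvx⟩
        · exact absurd h1 n5
        · exact absurd h1 n6
      · obtain ⟨n1, ⟨n2, n3⟩, n4, n5⟩ := h2
        rcases h1 with h1 | h1 | h1 | h1 | h1 | h1
        · exact absurd h1 n1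
        · exact absurd h1 n2
        · subst h1
          exact ⟨v, by simp, by simp [SimpleGraph.dist_self]⟩
        · subst h1
          exact ⟨v, by simp, by simp [SimpleGraph.dist_self]⟩
        · exact absurd h1 n4
        · exact absurd h1 n5
  · -- bridge: y and z adjacent, reroute through u-v-x-c
    have hadjyz : G.Adj y z :=
      aux_claw hclaw hvx.symm hyx.symm hxz hvy hvz hyz_ne havy havz
    refine ⟨u, Walk.cons hvu.symm (Walk.cons hvx (Walk.cons hxc
      (t.append (Walk.cons hadjyz r)))), v,
      ?_, ⟨u, by simp, Or.inr hvu.symm⟩, ?_, ?_, ?_⟩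
    · rw [Walk.cons_isCycle_iff]
      constructor
      · apply Walk.IsPath.mk'
        simp only [Walk.support_cons, Walk.support_append, List.tail_cons]
        rw [List.nodup_cons, List.nodup_cons]
        refine ⟨?_, ?_, ?_⟩
        · simp only [List.mem_cons, List.mem_append, not_or]
          exact ⟨hvnx, hvt, hvr⟩
        · simp only [List.mem_append, not_or]
          exact ⟨hxt, hxr⟩
        · exact htr
      · intro hm
        simp only [Walk.edges_cons, Walk.edges_append, List.mem_cons, List.mem_append,
          List.not_mem_nil, or_false] at hm
        rcases hm with hm | hm | hm | hm | hm
        · rw [Sym2.eq_iff] at hm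
          rcases hm with ⟨h1, h2⟩ | ⟨h1, h2⟩
          · exact hvnu h1.symm
          · exact hxu h1.symm
        · rw [Sym2.eq_iff] at hm
          rcases hm with ⟨h1, h2⟩ | ⟨h1, h2⟩
          · exact hxu h1.symm
          · exact h.ne h1
        · exact hut (Walk.fst_mem_support_of_mem_edges t hm)
        · rw [Sym2.eq_iff] at hm
          rcases hm with ⟨h1, h2⟩ | ⟨h1, h2⟩
          · exact huy h1
          · exact hvy h2
        · exact hvr (Walk.snd_mem_support_of_mem_edges r hm)
    · intro w hw
      simp only [Set.mem_union, Set.mem_setOf_eq, Set.mem_singleton_iff, Walk.support_cons,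
        Walk.support_append, Walk.support_concat, List.concat_eq_append, List.tail_cons,
        List.mem_cons, List.mem_append, List.not_mem_nil, or_false] at hw ⊢
      tauto
    · intro w hw
      simp only [Set.mem_union, Set.mem_setOf_eq, Set.mem_singleton_iff, Set.mem_insert_iff,
        Walk.support_cons, Walk.support_append, Walk.support_concat, List.concat_eq_append,
        List.tail_cons, List.mem_cons, List.mem_append, List.not_mem_nil, or_false] at hw ⊢
      tauto
    · intro e he
      rw [Set.mem_symmDiff] at he
      simp only [Set.mem_setOf_eq, Walk.edges_cons, Walk.edges_append, Walk.edges_concat,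
        List.concat_eq_append, List.mem_cons, List.mem_append, List.not_mem_nil, or_false,
        not_or] at he
      rcases he with ⟨h1, h2⟩ | ⟨h1, h2⟩
      · rcases h1 with h1 | (h1 | h1) | h1 | h1
        · subst h1
          exact ⟨u, by simp, aux_dist1 hvu⟩
        · exact absurd h1 h2.2.2.2.1
        · subst h1
          exact ⟨x, by simp, aux_dist1 hvx⟩
        · subst h1
          exact ⟨x, by simp, aux_dist1 hvx⟩
        · exact absurd h1 h2.2.2.2.2.2
      · rcases h1 with h1 | h1 | h1 | h1 | h1 | h1
        · subst h1
          exact ⟨u, by simp, aux_dist1 hvu⟩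
        · subst h1
          exact ⟨v, by simp, by simp [SimpleGraph.dist_self]⟩
        · subst h1
          exact ⟨x, by simp, aux_dist1 hvx⟩
        · exact absurd h1 h2.2.1.1
        · subst h1
          exact ⟨y, by simp, aux_dist2 hvx hyx.symm⟩
        · exact absurd h1 h2.2.2.2

end

/-- cycle extension lemma. Any cycle `C` can be extended through a
neighbouring vertex `v` by at most one further vertex `w ∈ N(C)`, altering only edges
with an endvertex at distance at most `2` from `v`. -/
theorem stmt_6 {V : Type} (G : SimpleGraph V) (h2 : TwoConnected G)
    (hlf : ∀ v : V, (G.neighborSet v).Finite) (hclaw : HFree claw G)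
    (hpaw : PawCondition G) {a : V} (C : G.Walk a a) (hC : C.IsCycle)
    (v : V) (hv : v ∉ C.support) (hvN : ∃ u ∈ C.support, G.Adj u v) :
    ∃ (b : V) (C' : G.Walk b b) (w : V), C'.IsCycle ∧
      (∃ u ∈ C.support, u = w ∨ G.Adj u w) ∧
      {x | x ∈ C.support} ∪ {v} ⊆ {x | x ∈ C'.support} ∧
      {x | x ∈ C'.support} ⊆ {x | x ∈ C.support} ∪ {v, w} ∧
      ∀ e ∈ symmDiff {e | e ∈ C.edges} {e | e ∈ C'.edges},
        ∃ x ∈ e, G.dist v x ≤ 2 := by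
  classical
  show AuxGoal G v {x | x ∈ C.support} {e | e ∈ C.edges}
  obtain ⟨u, hu, huv⟩ := hvN
  have hrotC : (C.rotate u hu).IsCycle := (Walk.isCycle_rotate hu).mpr hC
  have hs : ∀ y, y ∈ (C.rotate u hu).support ↔ y ∈ C.support := by
    intro y
    rw [aux_mem_tail hrotC.not_nil, aux_mem_tail hC.not_nil]
    exact (Walk.support_rotate C u hu).mem_iff
  have he : ∀ e, e ∈ (C.rotate u hu).edges ↔ e ∈ C.edges :=
    fun e => (Walk.rotate_edges C u hu).mem_iff
  have hseq : {x | x ∈ (C.rotate u hu).support} = {x | x ∈ C.support} := Set.ext hs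
  have heeq : {e | e ∈ (C.rotate u hu).edges} = {e | e ∈ C.edges} := Set.ext he
  rw [← hseq, ← heeq]
  have hvD : v ∉ (C.rotate u hu).support := fun hm => hv ((hs v).mp hm)
  obtain ⟨c, d, ha, hb, t, hdc, hDeq, hDrev⟩ := aux_cycle_decomp (C.rotate u hu) hrotC
  have hcyc1 : (Walk.cons ha (t.concat hb.symm)).IsCycle := hDeq ▸ hrotC
  have hv1 : v ∉ (Walk.cons ha (t.concat hb.symm)).support := hDeq ▸ hvD
  have hcyc2 : (Walk.cons hb (t.reverse.concat ha.symm)).IsCycle :=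
    hDrev ▸ aux_isCycle_reverse hrotC
  have hv2 : v ∉ (Walk.cons hb (t.reverse.concat ha.symm)).support := by
    rw [← hDrev, Walk.support_reverse, List.mem_reverse]
    exact hvD
  have hseq2 : {x | x ∈ (Walk.cons hb (t.reverse.concat ha.symm)).support}
      = {x | x ∈ (C.rotate u hu).support} := by
    rw [← hDrev]
    ext y
    simp [Walk.support_reverse]
  have heeq2 : {e | e ∈ (Walk.cons hb (t.reverse.concat ha.symm)).edges}
      = {e | e ∈ (C.rotate u hu).edges} := by
    rw [← hDrev]
    ext e
    simp [Walk.edges_reverse]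
  rw [hDeq]
  by_cases hvc : G.Adj v c
  · exact aux_S1 ha _ hcyc1 hv1 huv.symm hvc
  by_cases hvd : G.Adj v d
  · have hres := aux_S1 hb _ hcyc2 hv2 huv.symm hvd
    rwa [hseq2, heeq2, hDeq] at hres
  · have hcsupp : c ∈ (Walk.cons ha (t.concat hb.symm)).support := by
      rw [Walk.support_cons]
      exact List.mem_cons_of_mem _ (Walk.start_mem_support _)
    have hdsupp : d ∈ (Walk.cons ha (t.concat hb.symm)).support := by
      rw [Walk.support_cons, Walk.support_concat]
      exact List.mem_cons_of_mem _ (List.mem_append_left _ t.end_mem_support)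
    have hvnc : v ≠ c := fun heq => hv1 (heq ▸ hcsupp)
    have hvnd : v ≠ d := fun heq => hv1 (heq ▸ hdsupp)
    have hcdadj : G.Adj c d := aux_claw hclaw huv ha hb hvnc hvnd (Ne.symm hdc) hvc hvd
    obtain ⟨x, hxnotin, hxv, hxcd⟩ := hpaw v u c d huv.symm ha hb hcdadj hvc hvd hvnc hvnd
    simp only [Set.mem_insert_iff, Set.mem_singleton_iff, not_or] at hxnotin
    obtain ⟨hxnv, hxnu, hxnc, hxnd⟩ := hxnotin
    rcases hxcd with hxc | hxd
    · exact aux_half hclaw ha _ hcyc1 hv1 huv.symm hxv.symm hxc hxnu hxnc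
    · have hres := aux_half hclaw hb _ hcyc2 hv2 huv.symm hxv.symm hxd hxnu hxnd
      rwa [hseq2, heeq2, hDeq] at hres
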